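/- Let m : ℝ → [0,∞) be measurable with ∫_ℝ m(x)^α dx < ∞, and suppose m is nonincreasing on (a,∞) for some a > 0 and ∫_a^∞ t·m(t)^α dt = ∞. Then ∫_ℝ ∫_ℝ min(m(x)^α, m(t)^α) dx dt = ∞. -/

import Mathlib

open MeasureTheory

theorem stmt_6 (α a : ℝ) (hα0 : 0 < α) (hα2 : α < 2) (ha : 0 < a)
    (m : ℝ → ℝ) (hm0 : ∀ x, 0 ≤ m x) (hmeas : Measurable m)
    (hLα : Integrable (fun x => m x ^ α))
    (hmono : AntitoneOn m (Set.Ioi a))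
    (hdiv : ∫⁻ t in Set.Ioi a, ENNReal.ofReal (t * m t ^ α) = ⊤) :
    ∫⁻ t : ℝ, ∫⁻ x : ℝ, ENNReal.ofReal (min (m x ^ α) (m t ^ α)) = ⊤ := by
  set g : ℝ → ℝ := fun x => m x ^ α with hg
  have hgmeas : Measurable g := (Real.continuous_rpow_const hα0.le).measurable.comp hmeas
  have hg0 : ∀ x, 0 ≤ g x := fun x => Real.rpow_nonneg (hm0 x) α
  have hB : ∫⁻ x, ENNReal.ofReal (g x) < ⊤ := by
    have := hLα.hasFiniteIntegral
    rwa [hasFiniteIntegral_iff_ofReal (Filter.Eventually.of_forall hg0)] at this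
  -- Step 1: ∫_{Ioi a} (t - a) * g t = ⊤
  have key : ∫⁻ t in Set.Ioi a, ENNReal.ofReal ((t - a) * g t) = ⊤ := by
    have heq : ∀ t ∈ Set.Ioi a, ENNReal.ofReal (t * g t)
        = ENNReal.ofReal ((t - a) * g t) + ENNReal.ofReal (a * g t) := by
      intro t ht
      have ht' : a < t := ht
      rw [← ENNReal.ofReal_add (mul_nonneg (by linarith) (hg0 t))
        (mul_nonneg ha.le (hg0 t))]
      ring_nf
    have h2 : ∫⁻ t in Set.Ioi a, ENNReal.ofReal (a * g t) < ⊤ := by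
      have : ∫⁻ t in Set.Ioi a, ENNReal.ofReal (a * g t)
          = ENNReal.ofReal a * ∫⁻ t in Set.Ioi a, ENNReal.ofReal (g t) := by
        rw [← lintegral_const_mul _ (hgmeas.ennreal_ofReal)]
        exact lintegral_congr fun t => ENNReal.ofReal_mul ha.le
      rw [this]
      exact ENNReal.mul_lt_top ENNReal.ofReal_lt_top
        ((setLIntegral_le_lintegral _ _).trans_lt hB)
    have hsplit : ∫⁻ t in Set.Ioi a, ENNReal.ofReal (t * g t)
        = (∫⁻ t in Set.Ioi a, ENNReal.ofReal ((t - a) * g t))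
          + ∫⁻ t in Set.Ioi a, ENNReal.ofReal (a * g t) := by
      rw [← lintegral_add_left (f := fun t => ENNReal.ofReal ((t - a) * g t))
        (((measurable_id'.sub measurable_const).mul hgmeas).ennreal_ofReal)]
      exact setLIntegral_congr_fun_ae measurableSet_Ioi
        (Filter.Eventually.of_forall heq)
    rw [hsplit] at hdiv
    by_contra hne
    exact (ENNReal.add_ne_top.2 ⟨hne, h2.ne⟩) hdiv
  -- Step 2: pointwise lower bound on inner integral
  have hinner : ∀ t ∈ Set.Ioi a, ENNReal.ofReal ((t - a) * g t)
      ≤ ∫⁻ x, ENNReal.ofReal (min (g x) (g t)) := by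
    intro t ht
    have ht' : a < t := ht
    calc ENNReal.ofReal ((t - a) * g t)
        = ∫⁻ _ in Set.Ioc a t, ENNReal.ofReal (g t) := by
          rw [setLIntegral_const, Real.volume_Ioc,
            ENNReal.ofReal_mul (by linarith : (0:ℝ) ≤ t - a), mul_comm]
      _ ≤ ∫⁻ x in Set.Ioc a t, ENNReal.ofReal (min (g x) (g t)) := by
          refine setLIntegral_mono
            ((hgmeas.min measurable_const).ennreal_ofReal) fun x hx => ?_
          have hmx : m t ≤ m x := hmono hx.1 ht hx.2
          have : g t ≤ g x := Real.rpow_le_rpow (hm0 t) hmx hα0.le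
          rw [min_eq_right this]
      _ ≤ ∫⁻ x, ENNReal.ofReal (min (g x) (g t)) := setLIntegral_le_lintegral _ _
  -- assemble
  have hmeas2 : Measurable fun t => ∫⁻ x, ENNReal.ofReal (min (g x) (g t)) := by
    exact (((hgmeas.comp measurable_snd).min
      (hgmeas.comp measurable_fst)).ennreal_ofReal).lintegral_prod_right'
  have hfinal : ∫⁻ t in Set.Ioi a, ∫⁻ x, ENNReal.ofReal (min (g x) (g t)) = ⊤ := by
    rw [eq_top_iff, ← key]
    exact setLIntegral_mono hmeas2 hinner
  rw [eq_top_iff, ← hfinal]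
  exact setLIntegral_le_lintegral _ _
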